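/- Let Q be a finite quiver without loops with vertex set I, let k be a field of characteristic zero, α ∈ ℕ^I, and let λ ∈ ℤ^I be generic with respect to α. Then every representation of the deformed preprojective algebra Π^λ over k (with parameter the image of λ in k^I) with dimension vector α is simple: it has no subrepresentation other than 0 and the whole representation. -/

import Mathlib

open Matrix

/-- Transport of a square matrix along an equality of sizes. -/
def castSqMatrix {k : Type*} {m n : ℕ} (e : m = n)
    (M : Matrix (Fin m) (Fin m) k) : Matrix (Fin n) (Fin n) k :=
  Matrix.reindex (finCongr e) (finCongr e) M

/-- `λ ∈ ℤ^I` is generic with respect to `α ∈ ℕ^I` if `λ·α = 0` but `λ·β ≠ 0` for every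
`β` with `0 ≤ β ≤ α` componentwise, `β ≠ 0` and `β ≠ α`. -/
def GenericWrt {I : Type*} [Fintype I] (lam : I → ℤ) (α : I → ℕ) : Prop :=
  (∑ i, lam i * (α i : ℤ)) = 0 ∧
    ∀ β : I → ℕ, (∀ i, β i ≤ α i) → β ≠ 0 → β ≠ α → (∑ i, lam i * (β i : ℤ)) ≠ 0

private theorem sum_mulVec_aux {k : Type*} [Semiring k] {A : Type*} {m n : ℕ}
    (s : Finset A) (M : A → Matrix (Fin m) (Fin n) k) (v : Fin n → k) :
    (∑ a ∈ s, M a) *ᵥ v = ∑ a ∈ s, (M a) *ᵥ v := by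
  classical
  induction s using Finset.induction_on with
  | empty => simp
  | insert _ _ hnotmem ih => simp [Finset.sum_insert hnotmem, Matrix.add_mulVec, ih]

theorem deformed_preprojective_rep_is_simple_of_generic
    {I A : Type} [Fintype I] [Fintype A] [DecidableEq I] (t h : A → I)
    (hnoloops : ∀ a, t a ≠ h a)
    (k : Type) [Field k] [CharZero k] (α : I → ℕ) (lam : I → ℤ)
    (hgen : GenericWrt lam α)
    (x : ∀ a : A, Matrix (Fin (α (h a))) (Fin (α (t a))) k)
    (y : ∀ a : A, Matrix (Fin (α (t a))) (Fin (α (h a))) k)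
    (hrel : ∀ i : I,
      (∑ a : A, if e : h a = i then castSqMatrix (congrArg α e) (x a * y a) else 0)
        - (∑ a : A, if e : t a = i then castSqMatrix (congrArg α e) (y a * x a) else 0)
        = ((lam i : k)) • (1 : Matrix (Fin (α i)) (Fin (α i)) k))
    (W : ∀ i : I, Submodule k (Fin (α i) → k))
    (hWx : ∀ a : A, ∀ v ∈ W (t a), (x a).mulVec v ∈ W (h a))
    (hWy : ∀ a : A, ∀ v ∈ W (h a), (y a).mulVec v ∈ W (t a)) :
    (∀ i, W i = ⊥) ∨ (∀ i, W i = ⊤) := by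
  classical
  set β : I → ℕ := fun i => Module.finrank k (W i) with hβ
  let fX : ∀ a : A, W (t a) →ₗ[k] W (h a) := fun a =>
    ((x a).mulVecLin).restrict (fun v hv => by simpa using hWx a v hv)
  let fY : ∀ a : A, W (h a) →ₗ[k] W (t a) := fun a =>
    ((y a).mulVecLin).restrict (fun v hv => by simpa using hWy a v hv)
  have inv1 : ∀ (a : A) (i : I) (e : h a = i), ∀ v ∈ W i,
      (castSqMatrix (congrArg α e) (x a * y a)).mulVec v ∈ W i := by
    intro a i e
    subst e
    intro v hv
    simp only [castSqMatrix, finCongr_refl, Matrix.reindex_refl_refl]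
    rw [← Matrix.mulVec_mulVec]
    exact hWx a _ (hWy a v hv)
  have inv2 : ∀ (a : A) (i : I) (e : t a = i), ∀ v ∈ W i,
      (castSqMatrix (congrArg α e) (y a * x a)).mulVec v ∈ W i := by
    intro a i e
    subst e
    intro v hv
    simp only [castSqMatrix, finCongr_refl, Matrix.reindex_refl_refl]
    rw [← Matrix.mulVec_mulVec]
    exact hWy a _ (hWx a v hv)
  let E1 : A → ∀ i : I, Module.End k (W i) := fun a i =>
    if e : h a = i then
      ((castSqMatrix (congrArg α e) (x a * y a)).mulVecLin).restrict
        (fun v hv => by simpa using inv1 a i e v hv)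
    else 0
  let E2 : A → ∀ i : I, Module.End k (W i) := fun a i =>
    if e : t a = i then
      ((castSqMatrix (congrArg α e) (y a * x a)).mulVecLin).restrict
        (fun v hv => by simpa using inv2 a i e v hv)
    else 0
  have hE : ∀ i : I, (∑ a : A, E1 a i) - (∑ a : A, E2 a i)
      = (lam i : k) • (LinearMap.id : Module.End k (W i)) := by
    intro i
    refine LinearMap.ext fun v => Subtype.ext ?_
    have hcoe : ((((∑ a : A, E1 a i) - (∑ a : A, E2 a i)) v : W i) : Fin (α i) → k)
        = (((∑ a : A, if e : h a = i then castSqMatrix (congrArg α e) (x a * y a) else 0)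
            - (∑ a : A, if e : t a = i then castSqMatrix (congrArg α e) (y a * x a) else 0))).mulVec
            (v : Fin (α i) → k) := by
      rw [Matrix.sub_mulVec, sum_mulVec_aux, sum_mulVec_aux]
      simp only [LinearMap.sub_apply, LinearMap.sum_apply, Submodule.coe_sub,
        Submodule.coe_sum]
      congr 1
      · refine Finset.sum_congr rfl fun a _ => ?_
        by_cases e : h a = i
        · simp [E1, e, LinearMap.restrict_apply]
        · simp [E1, e]
      · refine Finset.sum_congr rfl fun a _ => ?_
        by_cases e : t a = i
        · simp [E2, e, LinearMap.restrict_apply]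
        · simp [E2, e]
    rw [hcoe, hrel i]
    simp [Matrix.smul_mulVec]
  have tr1 : ∀ (a : A) (i : I), LinearMap.trace k (W i) (E1 a i)
      = if h a = i then LinearMap.trace k (W (h a)) (fX a ∘ₗ fY a) else 0 := by
    intro a i
    by_cases e : h a = i
    · subst e
      simp only [E1, dif_pos rfl, if_pos rfl]
      refine congrArg _ (LinearMap.ext fun v => Subtype.ext ?_)
      simp [castSqMatrix, LinearMap.restrict_apply, fX, fY, Matrix.mulVec_mulVec]
    · simp [E1, e]
  have tr2 : ∀ (a : A) (i : I), LinearMap.trace k (W i) (E2 a i)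
      = if t a = i then LinearMap.trace k (W (t a)) (fY a ∘ₗ fX a) else 0 := by
    intro a i
    by_cases e : t a = i
    · subst e
      simp only [E2, dif_pos rfl, if_pos rfl]
      refine congrArg _ (LinearMap.ext fun v => Subtype.ext ?_)
      simp [castSqMatrix, LinearMap.restrict_apply, fX, fY, Matrix.mulVec_mulVec]
    · simp [E2, e]
  have key : (∑ i : I, (lam i : k) * (β i : k)) = 0 := by
    have step1 : ∀ i : I, (lam i : k) * (β i : k)
        = LinearMap.trace k (W i) ((∑ a : A, E1 a i) - (∑ a : A, E2 a i)) := by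
      intro i
      rw [hE i, _root_.map_smul, LinearMap.trace_id, smul_eq_mul]
    have step2 : ∀ i : I, LinearMap.trace k (W i) ((∑ a : A, E1 a i) - (∑ a : A, E2 a i))
        = (∑ a : A, LinearMap.trace k (W i) (E1 a i))
          - (∑ a : A, LinearMap.trace k (W i) (E2 a i)) := by
      intro i
      rw [(LinearMap.trace k (W i)).map_sub (∑ a : A, E1 a i) (∑ a : A, E2 a i),
        map_sum, map_sum]
    rw [Finset.sum_congr rfl fun i _ => step1 i, Finset.sum_congr rfl fun i _ => step2 i,
      Finset.sum_sub_distrib, Finset.sum_comm, Finset.sum_comm (s := Finset.univ)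
      (t := Finset.univ) (f := fun i a => LinearMap.trace k (W i) (E2 a i))]
    have s1 : ∀ a : A, (∑ i : I, LinearMap.trace k (W i) (E1 a i))
        = LinearMap.trace k (W (h a)) (fX a ∘ₗ fY a) := by
      intro a
      rw [Finset.sum_congr rfl fun i _ => tr1 a i]
      simp
    have s2 : ∀ a : A, (∑ i : I, LinearMap.trace k (W i) (E2 a i))
        = LinearMap.trace k (W (t a)) (fY a ∘ₗ fX a) := by
      intro a
      rw [Finset.sum_congr rfl fun i _ => tr2 a i]
      simp
    rw [Finset.sum_congr rfl fun a _ => s1 a, Finset.sum_congr rfl fun a _ => s2 a,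
      sub_eq_zero]
    exact Finset.sum_congr rfl fun a _ => (LinearMap.trace_comp_comm' (fX a) (fY a)).symm
  have keyZ : (∑ i : I, lam i * (β i : ℤ)) = 0 := by
    have : ((∑ i : I, lam i * (β i : ℤ) : ℤ) : k) = 0 := by push_cast; exact key
    exact_mod_cast this
  have hβle : ∀ i, β i ≤ α i := by
    intro i
    have := Submodule.finrank_le (W i)
    simpa [hβ] using this
  by_cases h0 : β = 0
  · left
    intro i
    have hz : Module.finrank k (W i) = 0 := by
      have := congrFun h0 i; simpa [hβ] using this
    exact Submodule.finrank_eq_zero.mp hz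
  · right
    have hα : β = α := by
      by_contra hne
      exact hgen.2 β hβle h0 hne keyZ
    intro i
    apply Submodule.eq_top_of_finrank_eq
    have := congrFun hα i
    simp only [hβ] at this
    rw [this]
    simp
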